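/- arXiv:1202.3570 — 2 statements merged into one kernel-verified Lean document; each statement's English description precedes it below -/
import Mathlib

section
/- Under assumptions A1–A4, if n_0^{(s)} = n^{(s)} = m for all s, where m ≥ 2 is a fixed integer, then σ̂²_{(s)} → ((m−1)/m) σ² almost surely as s → ∞; in particular the MLE of the variance is inconsistent. -/
open MeasureTheory ProbabilityTheory Filter Finset BoundedContinuousFunction
open scoped NNReal Topology

noncomputable section


/-- The sample mean of the first `n` observations of the sequence `x`. -/
def sampleMean (x : ℕ → ℝ) (n : ℕ) : ℝ := (∑ j ∈ Finset.range n, x j) / n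

/-- Vector of sample means: population `0` has sample size `n0`, every other population
has sample size `nn`.  `X i j` is the `j`-th observation from population `i`. -/
def xbarVec (n0 nn : ℕ) (X : ℕ → ℕ → ℝ) (i : ℕ) : ℝ :=
  sampleMean (X i) (if i = 0 then n0 else nn)

/-- Tree-order restricted MLE of the control mean `μ₀`:
`μ̂₀ = min_{I ⊆ {1,…,s}} (n₀ X̄₀ + Σ_{i∈I} n X̄ᵢ) / (n₀ + n |I|)` (the minimum includes `I = ∅`). -/
def treeMLE0 (n0 nn s : ℕ) (xbar : ℕ → ℝ) : ℝ :=
  ((Finset.Icc 1 s).powerset).inf' (Finset.powerset_nonempty _)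
    fun I => ((n0 : ℝ) * xbar 0 + ∑ i ∈ I, (nn : ℝ) * xbar i)
      / ((n0 : ℝ) + (nn : ℝ) * I.card)

/-- Tree-order restricted MLE of the `i`-th treatment mean (`1 ≤ i ≤ s`):
`μ̂ᵢ = max (μ̂₀, X̄ᵢ)`. -/
def treeMLE (n0 nn s : ℕ) (xbar : ℕ → ℝ) (i : ℕ) : ℝ :=
  max (treeMLE0 n0 nn s xbar) (xbar i)

/-- Tree-order restricted MLE of the common variance `σ²`. -/
def sigmaHat (n0 nn s : ℕ) (X : ℕ → ℕ → ℝ) : ℝ :=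
  (∑ j ∈ Finset.range n0, (X 0 j - treeMLE0 n0 nn s (xbarVec n0 nn X)) ^ 2
    + ∑ i ∈ Finset.Icc 1 s, ∑ j ∈ Finset.range nn,
        (X i j - treeMLE n0 nn s (xbarVec n0 nn X) i) ^ 2)
    / ((n0 + s * nn : ℕ) : ℝ)

section Aux
open Real Set
open scoped ENNReal

section GaussianMoments

lemma sq_le_exp_aux {b x : ℝ} (hb : 0 < b) : x ^ 2 ≤ 2 / b * Real.exp (b / 2 * x ^ 2) := by
  have h := Real.add_one_le_exp (b / 2 * x ^ 2)
  have h2 : 2/b * (b/2*x^2+1) ≤ 2/b * Real.exp (b / 2 * x ^ 2) :=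
    mul_le_mul_of_nonneg_left h (by positivity)
  have h3 : 2/b * (b/2*x^2+1) = x^2 + 2/b := by field_simp
  have h4 : (0:ℝ) < 2/b := by positivity
  linarith

lemma exp_neg_half_mul_sq_tendsto {b : ℝ} (hb : 0 < b) :
    Tendsto (fun x : ℝ => Real.exp (-(b/2) * x ^ 2)) atTop (𝓝 0) := by
  apply Real.tendsto_exp_atBot.comp
  have h : Tendsto (fun x : ℝ => x ^ 2) atTop atTop := tendsto_pow_atTop two_ne_zero
  exact (h.const_mul_atTop_of_neg (by linarith : -(b/2) < 0))

lemma integrable_sq_exp {b : ℝ} (hb : 0 < b) :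
    Integrable (fun x : ℝ => x ^ 2 * Real.exp (-b * x ^ 2)) := by
  have h := (integrable_exp_neg_mul_sq (show (0:ℝ) < b / 2 by positivity)).const_mul (2 / b)
  refine h.mono ((continuous_pow 2).mul (by fun_prop)).aestronglyMeasurable
    (ae_of_all _ fun x => ?_)
  have h2 := sq_le_exp_aux (x := x) hb
  have h3 : Real.exp (b/2 * x ^ 2) * Real.exp (-b * x ^ 2) = Real.exp (-(b/2) * x^2) := by
    rw [← Real.exp_add]; ring_nf
  have h1 : x ^ 2 * Real.exp (-b * x ^ 2) ≤ 2 / b * Real.exp (-(b/2) * x ^ 2) := by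
    calc x ^ 2 * Real.exp (-b * x ^ 2) ≤ (2 / b * Real.exp (b/2 * x^2)) * Real.exp (-b * x^2) :=
          mul_le_mul_of_nonneg_right h2 (Real.exp_pos _).le
      _ = 2 / b * Real.exp (-(b/2) * x ^ 2) := by rw [mul_assoc, h3]
  have h0 : 0 ≤ x ^ 2 * Real.exp (-b * x ^ 2) := by positivity
  rw [Real.norm_eq_abs, Real.norm_eq_abs, abs_of_nonneg h0]
  exact h1.trans (le_abs_self _)

lemma tendsto_mul_exp_neg_mul_sq {b : ℝ} (hb : 0 < b) :
    Tendsto (fun x : ℝ => x * Real.exp (-b * x ^ 2)) atTop (𝓝 0) := by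
  apply squeeze_zero' (Eventually.filter_mono (le_refl _) ?_)
    (g := fun x => (2/b + 1) * Real.exp (-(b/2) * x ^ 2)) ?_ ?_
  · filter_upwards [eventually_ge_atTop (0:ℝ)] with x hx; positivity
  · filter_upwards [eventually_ge_atTop (0:ℝ)] with x hx
    have h2 := sq_le_exp_aux (x := x) hb
    have hx2 : x ≤ x ^ 2 + 1 := by nlinarith
    have h5 : (1:ℝ) ≤ Real.exp (b/2 * x^2) := by
      rw [Real.one_le_exp_iff]; positivity
    have h3 : Real.exp (b/2 * x ^ 2) * Real.exp (-b * x ^ 2) = Real.exp (-(b/2) * x^2) := by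
      rw [← Real.exp_add]; ring_nf
    calc x * Real.exp (-b * x ^ 2) ≤ (x^2 + 1) * Real.exp (-b * x^2) :=
          mul_le_mul_of_nonneg_right hx2 (Real.exp_pos _).le
      _ ≤ ((2/b) * Real.exp (b/2*x^2) + Real.exp (b/2*x^2)) * Real.exp (-b * x^2) := by
          apply mul_le_mul_of_nonneg_right _ (Real.exp_pos _).le
          linarith
      _ = (2/b + 1) * Real.exp (-(b/2) * x ^ 2) := by
          rw [show (2/b) * Real.exp (b/2*x^2) + Real.exp (b/2*x^2)
              = (2/b+1) * Real.exp (b/2*x^2) by ring, mul_assoc, h3]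
  · rw [show (0:ℝ) = (2/b+1) * 0 by ring]
    exact (exp_neg_half_mul_sq_tendsto hb).const_mul _

/-- Integration by parts on `Ioi 0`. -/
lemma integral_Ioi_sq_exp {b : ℝ} (hb : 0 < b) :
    ∫ x in Ioi (0:ℝ), x ^ 2 * Real.exp (-b * x ^ 2)
      = 1 / (2*b) * ∫ x in Ioi (0:ℝ), Real.exp (-b * x ^ 2) := by
  have hderiv : ∀ x ∈ Ici (0:ℝ),
      HasDerivAt (fun y : ℝ => -(y * Real.exp (-b * y ^ 2)) / (2*b))
        (x ^ 2 * Real.exp (-b * x ^ 2) - Real.exp (-b * x ^ 2) / (2*b)) x := by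
    intro x _
    have h1 : HasDerivAt (fun y : ℝ => -b * y ^ 2) (-b * (2 * x)) x := by
      simpa using ((hasDerivAt_pow 2 x).const_mul (-b))
    have h2 : HasDerivAt (fun y : ℝ => Real.exp (-b * y ^ 2))
        (Real.exp (-b * x ^ 2) * (-b * (2*x))) x := h1.exp
    have h3 : HasDerivAt (fun y : ℝ => y * Real.exp (-b * y ^ 2))
        (1 * Real.exp (-b * x ^ 2) + x * (Real.exp (-b * x ^ 2) * (-b * (2*x)))) x :=
      (hasDerivAt_id x).mul h2
    have h4 := (h3.neg).div_const (2*b)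
    refine h4.congr_deriv ?_
    have hb2 : (2*b) ≠ 0 := by positivity
    field_simp
    ring
  have hint : IntegrableOn
      (fun x => x ^ 2 * Real.exp (-b * x ^ 2) - Real.exp (-b * x ^ 2) / (2*b)) (Ioi 0) := by
    exact ((integrable_sq_exp hb).sub ((integrable_exp_neg_mul_sq hb).div_const _)).integrableOn
  have htend : Tendsto (fun y : ℝ => -(y * Real.exp (-b * y ^ 2)) / (2*b)) atTop (𝓝 0) := by
    rw [show (0:ℝ) = -(0:ℝ)/(2*b) by ring]
    exact ((tendsto_mul_exp_neg_mul_sq hb).neg).div_const _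
  have := integral_Ioi_of_hasDerivAt_of_tendsto' hderiv hint htend
  rw [integral_sub ((integrable_sq_exp hb).integrableOn)
      (((integrable_exp_neg_mul_sq hb).div_const _).integrableOn)] at this
  simp only [mul_zero, zero_mul, neg_zero, zero_div, sub_zero] at this
  have h6 : ∫ x in Ioi (0:ℝ), Real.exp (-b * x ^ 2) / (2*b)
      = (∫ x in Ioi (0:ℝ), Real.exp (-b * x ^ 2)) / (2*b) := integral_div _ _
  rw [h6] at this
  have : ∫ x in Ioi (0:ℝ), x ^ 2 * Real.exp (-b * x ^ 2)
      = (∫ x in Ioi (0:ℝ), Real.exp (-b * x ^ 2)) / (2*b) := by linarith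
  rw [this]; ring

lemma integral_even_eq_two_mul {f : ℝ → ℝ} (hf : ∀ x, f (-x) = f x) :
    ∫ x, f x = 2 * ∫ x in Ioi (0:ℝ), f x := by
  rw [← integral_comp_abs (f := f)]
  congr 1
  ext x
  rcases abs_choice x with h | h
  · rw [h]
  · rw [h, hf]

lemma integral_sq_exp {b : ℝ} (hb : 0 < b) :
    ∫ x : ℝ, x ^ 2 * Real.exp (-b * x ^ 2) = 1/(2*b) * Real.sqrt (π / b) := by
  have he : ∀ x : ℝ, (-x) ^ 2 * Real.exp (-b * (-x) ^ 2) = x ^ 2 * Real.exp (-b * x ^ 2) := by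
    intro x; ring_nf
  rw [integral_even_eq_two_mul he, integral_Ioi_sq_exp hb]
  have he2 : ∀ x : ℝ, Real.exp (-b * (-x) ^ 2) = Real.exp (-b * x ^ 2) := fun x => by ring_nf
  have h2 : (∫ x : ℝ, Real.exp (-b * x ^ 2)) = 2 * ∫ x in Ioi (0:ℝ), Real.exp (-b * x ^ 2) :=
    integral_even_eq_two_mul he2
  rw [integral_gaussian] at h2
  rw [h2]; ring

end GaussianMoments

section GaussianTransfer

lemma integral_odd_eq_zero' {f : ℝ → ℝ} (hf : ∀ x, f (-x) = -f x) : ∫ x, f x = 0 := by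
  have h1 : ∫ x, f (-x) = ∫ x, f x := by
    rw [← integral_neg_eq_self (fun x => f (-x))]
    simp
  have h2 : ∫ x, f (-x) = - ∫ x, f x := by
    simp only [hf]
    exact integral_neg f
  linarith

variable {v : ℝ≥0} (hv : v ≠ 0)

lemma gaussianReal_eq_withDensity (μ0 : ℝ) (hv : v ≠ 0) :
    gaussianReal μ0 v
      = volume.withDensity (fun x => ((gaussianPDFReal μ0 v x).toNNReal : ℝ≥0∞)) := by
  rw [gaussianReal_of_var_ne_zero μ0 hv]
  rfl

lemma integral_gaussianReal_eq (μ0 : ℝ) (hv : v ≠ 0) (g : ℝ → ℝ) :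
    ∫ x, g x ∂(gaussianReal μ0 v) = ∫ x, gaussianPDFReal μ0 v x * g x := by
  rw [gaussianReal_eq_withDensity μ0 hv,
    integral_withDensity_eq_integral_smul ((measurable_gaussianPDFReal μ0 v).real_toNNReal) g]
  congr 1
  ext x
  rw [NNReal.smul_def, Real.coe_toNNReal _ (gaussianPDFReal_nonneg μ0 v x), smul_eq_mul]

lemma integrable_gaussianReal_iff (μ0 : ℝ) (hv : v ≠ 0) (g : ℝ → ℝ) :
    Integrable g (gaussianReal μ0 v)
      ↔ Integrable (fun x => gaussianPDFReal μ0 v x * g x) := by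
  rw [gaussianReal_eq_withDensity μ0 hv,
    integrable_withDensity_iff_integrable_smul ((measurable_gaussianPDFReal μ0 v).real_toNNReal)]
  constructor <;> intro h <;> refine h.congr (ae_of_all _ fun x => ?_) <;>
    simp only [NNReal.smul_def, Real.coe_toNNReal _ (gaussianPDFReal_nonneg μ0 v x), smul_eq_mul]

lemma gaussianPDFReal_zero_eq (x : ℝ) :
    gaussianPDFReal 0 v x = (Real.sqrt (2 * π * v))⁻¹ * Real.exp (-(2*(v:ℝ))⁻¹ * x ^ 2) := by
  rw [gaussianPDFReal_def]
  simp only [sub_zero]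
  congr 1
  field_simp

lemma vpos (hv : v ≠ 0) : 0 < (v:ℝ) := by
  exact_mod_cast pos_iff_ne_zero.2 hv

lemma integrable_id_gaussianReal (hv : v ≠ 0) :
    Integrable (fun x => x) (gaussianReal 0 v) := by
  rw [integrable_gaussianReal_iff 0 hv]
  have hb : 0 < (2*(v:ℝ))⁻¹ := by have := vpos hv; positivity
  have := (integrable_mul_exp_neg_mul_sq hb).const_mul (Real.sqrt (2 * π * v))⁻¹
  refine this.congr (ae_of_all _ fun x => ?_)
  simp only [gaussianPDFReal_zero_eq]
  ring

lemma integrable_sq_gaussianReal (hv : v ≠ 0) :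
    Integrable (fun x => x ^ 2) (gaussianReal 0 v) := by
  rw [integrable_gaussianReal_iff 0 hv]
  have hb : 0 < (2*(v:ℝ))⁻¹ := by have := vpos hv; positivity
  have := (integrable_sq_exp hb).const_mul (Real.sqrt (2 * π * v))⁻¹
  refine this.congr (ae_of_all _ fun x => ?_)
  simp only [gaussianPDFReal_zero_eq]
  ring

lemma integral_id_gaussianReal (hv : v ≠ 0) :
    ∫ x, x ∂(gaussianReal 0 v) = 0 := by
  rw [integral_gaussianReal_eq 0 hv]
  apply integral_odd_eq_zero'
  intro x
  rw [gaussianPDFReal_zero_eq, gaussianPDFReal_zero_eq]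
  ring_nf

lemma integral_sq_gaussianReal (hv : v ≠ 0) :
    ∫ x, x ^ 2 ∂(gaussianReal 0 v) = v := by
  rw [integral_gaussianReal_eq 0 hv]
  have hb : 0 < (2*(v:ℝ))⁻¹ := by have := vpos hv; positivity
  have h1 : ∫ x, gaussianPDFReal 0 v x * x ^ 2
      = (Real.sqrt (2 * π * v))⁻¹ * ∫ x : ℝ, x ^ 2 * Real.exp (-(2*(v:ℝ))⁻¹ * x ^ 2) := by
    rw [← integral_const_mul]
    congr 1; ext x
    rw [gaussianPDFReal_zero_eq]; ring
  rw [h1, integral_sq_exp hb]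
  have hπ : π / (2*(v:ℝ))⁻¹ = 2 * π * v := by
    field_simp
  have h2 : 1 / (2 * (2*(v:ℝ))⁻¹) = v := by
    field_simp
  rw [hπ, h2]
  have h3 : Real.sqrt (2 * π * v) > 0 := by
    apply Real.sqrt_pos.2; have := vpos hv; have := Real.pi_pos; positivity
  field_simp

end GaussianTransfer



section Deterministic

/-- centered within-group sum of squares -/
def wStat (m : ℕ) (μ : ℕ → ℝ) (x : ℕ → ℕ → ℝ) (i : ℕ) : ℝ :=
  ∑ j ∈ Finset.range m, (x i j - μ i) ^ 2

/-- centered within-group sum -/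
def lStat (m : ℕ) (μ : ℕ → ℝ) (x : ℕ → ℕ → ℝ) (i : ℕ) : ℝ :=
  ∑ j ∈ Finset.range m, (x i j - μ i)

/-- squared deviation of the sample mean -/
def dStat (m : ℕ) (μ : ℕ → ℝ) (x : ℕ → ℕ → ℝ) (i : ℕ) : ℝ :=
  (lStat m μ x i / m) ^ 2

variable {m s : ℕ} {x : ℕ → ℕ → ℝ} {μ : ℕ → ℝ}

lemma xbarVec_eq (hm : m ≠ 0) (i : ℕ) :
    xbarVec m m x i = μ i + lStat m μ x i / m := by
  have hm' : (m:ℝ) ≠ 0 := Nat.cast_ne_zero.2 hm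
  have h1 : lStat m μ x i = (∑ j ∈ Finset.range m, x i j) - m * μ i := by
    rw [lStat, Finset.sum_sub_distrib]
    simp [mul_comm]
  rw [xbarVec, sampleMean, ite_self, h1]
  field_simp
  ring

lemma sum_sq_dev (hm : m ≠ 0) (i : ℕ) (a : ℝ) :
    ∑ j ∈ Finset.range m, (x i j - a) ^ 2
      = wStat m μ x i - m * dStat m μ x i + m * (a - xbarVec m m x i) ^ 2 := by
  have hm' : (m:ℝ) ≠ 0 := Nat.cast_ne_zero.2 hm
  have h1 : ∑ j ∈ Finset.range m, (x i j - a) ^ 2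
      = ∑ j ∈ Finset.range m,
          ((x i j - μ i) ^ 2 - 2 * (a - μ i) * (x i j - μ i) + (a - μ i) ^ 2) :=
    Finset.sum_congr rfl fun j _ => by ring
  rw [h1]
  rw [Finset.sum_add_distrib, Finset.sum_sub_distrib, ← Finset.mul_sum, Finset.sum_const,
    Finset.card_range, nsmul_eq_mul]
  rw [xbarVec_eq (μ := μ) hm i, wStat, dStat, lStat]
  set A := ∑ j ∈ Finset.range m, (x i j - μ i) with hA
  set B := ∑ j ∈ Finset.range m, (x i j - μ i) ^ 2 with hB
  field_simp
  ring

lemma treeMLE0_le_xbar0 (hm : m ≠ 0) :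
    treeMLE0 m m s (xbarVec m m x) ≤ xbarVec m m x 0 := by
  have hm' : (m:ℝ) ≠ 0 := Nat.cast_ne_zero.2 hm
  have h0 : (∅ : Finset ℕ) ∈ (Finset.Icc 1 s).powerset := by simp
  have := Finset.inf'_le (b := (∅ : Finset ℕ))
    (fun I => ((m : ℝ) * xbarVec m m x 0 + ∑ i ∈ I, (m : ℝ) * xbarVec m m x i)
      / ((m : ℝ) + (m : ℝ) * I.card)) h0
  rw [treeMLE0]
  refine le_of_le_of_eq this ?_
  simp
  field_simp

lemma le_treeMLE0 (hm : m ≠ 0) {t : ℝ} (ht : ∀ i ∈ Finset.range (s+1), t ≤ xbarVec m m x i) :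
    t ≤ treeMLE0 m m s (xbarVec m m x) := by
  have hmpos : (0:ℝ) < m := Nat.cast_pos.2 (Nat.pos_of_ne_zero hm)
  apply Finset.le_inf'
  intro I hI
  rw [Finset.mem_powerset] at hI
  have hmem : ∀ i ∈ I, i ∈ Finset.range (s+1) := by
    intro i hi
    have := hI hi
    simp only [Finset.mem_Icc] at this
    simp only [Finset.mem_range]
    omega
  have hden : (0:ℝ) < (m : ℝ) + (m : ℝ) * I.card := by positivity
  rw [le_div_iff₀ hden]
  have h1 : t * ((m:ℝ) + (m:ℝ) * I.card)
      = (m:ℝ) * t + ∑ i ∈ I, (m:ℝ) * t := by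
    rw [Finset.sum_const, nsmul_eq_mul]
    ring
  rw [h1]
  gcongr ?_ + ?_
  · exact mul_le_mul_of_nonneg_left (ht 0 (by simp)) hmpos.le
  · exact Finset.sum_le_sum fun i hi =>
      mul_le_mul_of_nonneg_left (ht i (hmem i hi)) hmpos.le

lemma treeMLE0_le_avg (hm : m ≠ 0) {I : Finset ℕ} (hI : I ⊆ Finset.Icc 1 s) :
    treeMLE0 m m s (xbarVec m m x)
      ≤ ((m : ℝ) * xbarVec m m x 0 + ∑ i ∈ I, (m : ℝ) * xbarVec m m x i)
        / ((m : ℝ) + (m : ℝ) * I.card) :=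
  Finset.inf'_le _ (Finset.mem_powerset.2 hI)

lemma resid_sum_le (hm : m ≠ 0) :
    ∑ i ∈ Finset.Icc 1 s,
        (max (treeMLE0 m m s (xbarVec m m x)) (xbarVec m m x i) - xbarVec m m x i) ^ 2
      ≤ (xbarVec m m x 0 - treeMLE0 m m s (xbarVec m m x)) ^ 2 := by
  have hmpos : (0:ℝ) < m := Nat.cast_pos.2 (Nat.pos_of_ne_zero hm)
  set c := treeMLE0 m m s (xbarVec m m x) with hc
  set xb := xbarVec m m x with hxb
  set A := (Finset.Icc 1 s).filter (fun i => xb i < c) with hA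
  have hsub : A ⊆ Finset.Icc 1 s := Finset.filter_subset _ _
  have h0 : ∑ i ∈ Finset.Icc 1 s, (max c (xb i) - xb i) ^ 2
      = ∑ i ∈ A, (c - xb i) ^ 2 := by
    rw [hA, Finset.sum_filter]
    refine Finset.sum_congr rfl fun i _ => ?_
    by_cases h : xb i < c
    · rw [if_pos h, max_eq_left h.le]
    · rw [if_neg h, max_eq_right (not_lt.1 h), sub_self]
      norm_num
  have key := treeMLE0_le_avg (s := s) (x := x) hm hsub
  rw [← hc, ← hxb, le_div_iff₀ (by positivity)] at key
  have h1 : ∑ i ∈ A, (c - xb i) ≤ xb 0 - c := by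
    have expand : c * ((m:ℝ) + (m:ℝ) * A.card)
        = (m:ℝ) * c + ∑ i ∈ A, (m:ℝ) * c := by
      rw [Finset.sum_const, nsmul_eq_mul]; ring
    rw [expand] at key
    have h2 : ∑ i ∈ A, ((m:ℝ) * c - (m:ℝ) * xb i) ≤ (m:ℝ) * xb 0 - (m:ℝ) * c := by
      rw [Finset.sum_sub_distrib]
      linarith
    have h3 : (m:ℝ) * ∑ i ∈ A, (c - xb i) ≤ (m:ℝ) * (xb 0 - c) := by
      rw [Finset.mul_sum, mul_sub]
      refine le_trans (le_of_eq ?_) (h2.trans (le_of_eq (by ring)))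
      refine Finset.sum_congr rfl fun i _ => by ring
    exact le_of_mul_le_mul_left (by linarith) hmpos
  have hnn : ∀ i ∈ A, 0 ≤ c - xb i := by
    intro i hi
    rw [hA, Finset.mem_filter] at hi
    linarith [hi.2]
  have hsumnn : 0 ≤ ∑ i ∈ A, (c - xb i) := Finset.sum_nonneg hnn
  have h4 : ∑ i ∈ A, (c - xb i) ^ 2 ≤ (∑ i ∈ A, (c - xb i)) ^ 2 := by
    rw [sq (∑ i ∈ A, (c - xb i)), Finset.sum_mul]
    refine Finset.sum_le_sum fun i hi => ?_
    rw [sq]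
    exact mul_le_mul_of_nonneg_left (Finset.single_le_sum hnn hi) (hnn i hi)
  have h5 : (∑ i ∈ A, (c - xb i)) ^ 2 ≤ (xb 0 - c) ^ 2 :=
    pow_le_pow_left₀ hsumnn h1 2
  rw [h0]
  exact h4.trans h5

lemma range_succ_eq_insert (s : ℕ) : Finset.range (s+1) = insert 0 (Finset.Icc 1 s) := by
  ext i
  simp only [Finset.mem_range, Finset.mem_insert, Finset.mem_Icc]
  omega

lemma sigmaHat_decomp (hm : m ≠ 0) :
    sigmaHat m m s x
      = ((∑ i ∈ Finset.range (s+1), wStat m μ x i)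
          - m * (∑ i ∈ Finset.range (s+1), dStat m μ x i)
          + m * ((treeMLE0 m m s (xbarVec m m x) - xbarVec m m x 0) ^ 2
              + ∑ i ∈ Finset.Icc 1 s,
                  (max (treeMLE0 m m s (xbarVec m m x)) (xbarVec m m x i)
                    - xbarVec m m x i) ^ 2))
        / (((s:ℝ) + 1) * m) := by
  have hm' : (m:ℝ) ≠ 0 := Nat.cast_ne_zero.2 hm
  set c := treeMLE0 m m s (xbarVec m m x) with hc
  rw [sigmaHat]
  have hden : ((m + s * m : ℕ) : ℝ) = ((s:ℝ) + 1) * m := by push_cast; ring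
  rw [hden]
  congr 1
  have h0 := sum_sq_dev (x := x) (μ := μ) hm 0 c
  have hi : ∀ i ∈ Finset.Icc 1 s,
      ∑ j ∈ Finset.range m, (x i j - treeMLE m m s (xbarVec m m x) i) ^ 2
        = wStat m μ x i - m * dStat m μ x i
          + m * (max c (xbarVec m m x i) - xbarVec m m x i) ^ 2 := fun i _ =>
    sum_sq_dev (x := x) (μ := μ) hm i _
  rw [h0, Finset.sum_congr rfl hi]
  rw [range_succ_eq_insert, Finset.sum_insert (by simp), Finset.sum_insert (by simp),
    Finset.sum_add_distrib, Finset.sum_sub_distrib]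
  rw [show (∑ i ∈ Finset.Icc 1 s, (m:ℝ) * dStat m μ x i)
      = (m:ℝ) * ∑ i ∈ Finset.Icc 1 s, dStat m μ x i from (Finset.mul_sum _ _ _).symm,
    show (∑ i ∈ Finset.Icc 1 s, (m:ℝ) * (max c (xbarVec m m x i) - xbarVec m m x i) ^ 2)
      = (m:ℝ) * ∑ i ∈ Finset.Icc 1 s, (max c (xbarVec m m x i) - xbarVec m m x i) ^ 2 from
      (Finset.mul_sum _ _ _).symm]
  ring

lemma xb0_sub_c_sq_le (hm : m ≠ 0) (hA1 : ∀ i, 1 ≤ i → μ 0 ≤ μ i) :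
    (xbarVec m m x 0 - treeMLE0 m m s (xbarVec m m x)) ^ 2
      ≤ 2 * dStat m μ x 0
        + 2 * ((Finset.range (s+1)).sup' (by simp) (dStat m μ x)) := by
  have hmpos : (0:ℝ) < m := Nat.cast_pos.2 (Nat.pos_of_ne_zero hm)
  set c := treeMLE0 m m s (xbarVec m m x) with hc
  set xb := xbarVec m m x with hxb
  obtain ⟨i0, hi0mem, hi0⟩ := Finset.exists_mem_eq_inf' (s := Finset.range (s+1))
    (by simp) xb
  have hcge : xb i0 ≤ c := by
    rw [hc, hxb]
    refine le_trans (le_of_eq ?_) (le_treeMLE0 (t := (Finset.range (s+1)).inf' (by simp) xb)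
      hm ?_)
    · rw [hi0]
    · intro i hi
      exact Finset.inf'_le _ hi
  have hcle : c ≤ xb 0 := treeMLE0_le_xbar0 hm
  have hmu : μ 0 ≤ μ i0 := by
    rcases Nat.eq_zero_or_pos i0 with h | h
    · rw [h]
    · exact hA1 i0 h
  have hxbeq : ∀ i, xb i = μ i + lStat m μ x i / m := fun i => xbarVec_eq hm i
  have hgap : xb 0 - c ≤ |lStat m μ x 0 / m| + |lStat m μ x i0 / m| := by
    have heq : xb 0 - xb i0 = (μ 0 - μ i0) + (lStat m μ x 0 / m - lStat m μ x i0 / m) := by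
      rw [hxbeq 0, hxbeq i0]; ring
    have h2 : xb 0 - xb i0 ≤ |lStat m μ x 0 / m| + |lStat m μ x i0 / m| := by
      rw [heq]
      have := le_abs_self (lStat m μ x 0 / m)
      have := neg_abs_le (lStat m μ x i0 / m)
      linarith
    linarith
  have hnn : 0 ≤ xb 0 - c := by linarith
  have hsq : (xb 0 - c) ^ 2 ≤ (|lStat m μ x 0 / m| + |lStat m μ x i0 / m|) ^ 2 :=
    pow_le_pow_left₀ hnn hgap 2
  have hexp : (|lStat m μ x 0 / m| + |lStat m μ x i0 / m|) ^ 2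
      ≤ 2 * dStat m μ x 0 + 2 * dStat m μ x i0 := by
    rw [dStat, dStat]
    nlinarith [sq_abs (lStat m μ x 0 / m), sq_abs (lStat m μ x i0 / m),
      sq_nonneg (|lStat m μ x 0 / m| - |lStat m μ x i0 / m|)]
  have hsup : dStat m μ x i0 ≤ (Finset.range (s+1)).sup' (by simp) (dStat m μ x) :=
    Finset.le_sup' _ hi0mem
  calc (xb 0 - c) ^ 2 ≤ 2 * dStat m μ x 0 + 2 * dStat m μ x i0 := hsq.trans hexp
    _ ≤ _ := by linarith

end Deterministic

section Prob

variable {Ω : Type*} [MeasurableSpace Ω] {P : Measure Ω} [IsProbabilityMeasure P]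
  {v : ℝ≥0} {m : ℕ} {Y : ℕ × ℕ → Ω → ℝ}

/-- The block vector of the `i`-th population. -/
def blockVec (m : ℕ) (Y : ℕ × ℕ → Ω → ℝ) (i : ℕ) (ω : Ω) : Fin m → ℝ :=
  fun j => Y (i, (j : ℕ)) ω

lemma measurable_blockVec (hYmeas : ∀ p, Measurable (Y p)) (i : ℕ) :
    Measurable (blockVec m Y i) :=
  measurable_pi_lambda _ fun _ => hYmeas _

lemma map_blockVec_pi (hYmeas : ∀ p, Measurable (Y p))
    (hYindep : iIndepFun Y P)
    (hYdist : ∀ p, Measure.map (Y p) P = gaussianReal 0 v) (i : ℕ) :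
    Measure.map (blockVec m Y i) P = Measure.pi (fun _ : Fin m => gaussianReal 0 v) := by
  classical
  symm
  apply Measure.pi_eq
  intro s hs
  rw [Measure.map_apply (measurable_blockVec hYmeas i) (MeasurableSet.univ_pi hs)]
  set sets : ℕ × ℕ → Set ℝ := fun p => if h : p.2 < m then s ⟨p.2, h⟩ else Set.univ with hsets
  have hpre : blockVec m Y i ⁻¹' (Set.univ.pi s)
      = ⋂ p ∈ (({i} : Finset ℕ) ×ˢ Finset.range m), Y p ⁻¹' sets p := by
    ext ω
    simp only [Set.mem_preimage, Set.mem_univ_pi, Set.mem_iInter, Finset.mem_product,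
      Finset.mem_singleton, Finset.mem_range, blockVec]
    constructor
    · rintro h ⟨p1, p2⟩ ⟨rfl, hp2⟩
      simp only [hsets, hp2, dif_pos]
      exact h ⟨p2, hp2⟩
    · intro h j
      have := h (i, (j : ℕ)) ⟨rfl, j.isLt⟩
      simpa only [hsets, j.isLt, dif_pos, Fin.eta] using this
  rw [hpre, (iIndepFun_iff_measure_inter_preimage_eq_mul.1 hYindep)
    (({i} : Finset ℕ) ×ˢ Finset.range m)
    (fun p _ => by
      rw [hsets]
      dsimp only
      split_ifs with h
      · exact hs _
      · exact MeasurableSet.univ)]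
  rw [Finset.prod_product, Finset.prod_singleton]
  have hval : ∀ j ∈ Finset.range m, P (Y (i, j) ⁻¹' sets (i, j))
      = gaussianReal 0 v (sets (i, j)) := by
    intro j hj
    rw [← hYdist (i, j), Measure.map_apply (hYmeas _)]
    rw [hsets]
    dsimp only
    split_ifs with h
    · exact hs _
    · exact MeasurableSet.univ
  rw [Finset.prod_congr rfl hval]
  rw [← Fin.prod_univ_eq_prod_range (fun j => gaussianReal 0 v (sets (i, j))) m]
  refine Finset.prod_congr rfl fun j _ => ?_
  congr 1
  simp only [hsets, j.isLt, dif_pos, Fin.eta]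

lemma blockVec_indepFun (hYmeas : ∀ p, Measurable (Y p))
    (hYindep : iIndepFun Y P)
    {i k : ℕ} (hik : i ≠ k) :
    IndepFun (blockVec m Y i) (blockVec m Y k) P := by
  classical
  have hdisj : Disjoint (({i} : Finset ℕ) ×ˢ Finset.range m)
      (({k} : Finset ℕ) ×ˢ Finset.range m) := by
    simp only [Finset.disjoint_left, Finset.mem_product, Finset.mem_singleton]
    rintro ⟨p1, p2⟩ ⟨rfl, -⟩ ⟨rfl, -⟩
    exact hik rfl
  have h := hYindep.indepFun_finset _ _ hdisj hYmeas
  have hri : Measurable (fun (y : (({i} : Finset ℕ) ×ˢ Finset.range m : Finset (ℕ × ℕ)) → ℝ)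
      (j : Fin m) => y ⟨(i, (j:ℕ)), by simp [Finset.mem_product]⟩) :=
    measurable_pi_lambda _ fun _ => measurable_pi_apply _
  have hrk : Measurable (fun (y : (({k} : Finset ℕ) ×ˢ Finset.range m : Finset (ℕ × ℕ)) → ℝ)
      (j : Fin m) => y ⟨(k, (j:ℕ)), by simp [Finset.mem_product]⟩) :=
    measurable_pi_lambda _ fun _ => measurable_pi_apply _
  exact h.comp hri hrk

lemma comp_blockVec_identDistrib (hYmeas : ∀ p, Measurable (Y p))
    (hYindep : iIndepFun Y P)
    (hYdist : ∀ p, Measure.map (Y p) P = gaussianReal 0 v)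
    {g : (Fin m → ℝ) → ℝ} (hg : Measurable g) (i : ℕ) :
    IdentDistrib (fun ω => g (blockVec m Y i ω)) (fun ω => g (blockVec m Y 0 ω)) P P := by
  refine ⟨(hg.comp (measurable_blockVec hYmeas i)).aemeasurable,
    (hg.comp (measurable_blockVec hYmeas 0)).aemeasurable, ?_⟩
  have h1 : (fun ω => g (blockVec m Y i ω)) = g ∘ blockVec m Y i := rfl
  have h2 : (fun ω => g (blockVec m Y 0 ω)) = g ∘ blockVec m Y 0 := rfl
  rw [h1, h2, ← Measure.map_map hg (measurable_blockVec hYmeas i),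
    ← Measure.map_map hg (measurable_blockVec hYmeas 0),
    map_blockVec_pi hYmeas hYindep hYdist i, map_blockVec_pi hYmeas hYindep hYdist 0]

lemma comp_blockVec_pairwise (hYmeas : ∀ p, Measurable (Y p))
    (hYindep : iIndepFun Y P)
    {g : (Fin m → ℝ) → ℝ} (hg : Measurable g) :
    Pairwise (Function.onFun (IndepFun · · P) (fun i ω => g (blockVec m Y i ω))) := by
  intro i k hik
  exact (blockVec_indepFun hYmeas hYindep hik).comp hg hg

variable (hv : v ≠ 0) (hYmeas : ∀ p, Measurable (Y p))
  (hYdist : ∀ p, Measure.map (Y p) P = gaussianReal 0 v)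

include hv hYmeas hYdist

lemma integrable_Y (p : ℕ × ℕ) : Integrable (Y p) P := by
  have h : Integrable (fun x : ℝ => x) (Measure.map (Y p) P) := by
    rw [hYdist p]; exact integrable_id_gaussianReal hv
  exact (integrable_map_measure h.aestronglyMeasurable (hYmeas p).aemeasurable).1 h

lemma integral_Y (p : ℕ × ℕ) : ∫ ω, Y p ω ∂P = 0 := by
  have h : ∫ ω, Y p ω ∂P = ∫ x, x ∂(Measure.map (Y p) P) := by
    rw [integral_map (hYmeas p).aemeasurable]
    exact aestronglyMeasurable_id
  rw [h, hYdist p, integral_id_gaussianReal hv]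

lemma integrable_Y_sq (p : ℕ × ℕ) : Integrable (fun ω => (Y p ω) ^ 2) P := by
  have h : Integrable (fun x : ℝ => x ^ 2) (Measure.map (Y p) P) := by
    rw [hYdist p]; exact integrable_sq_gaussianReal hv
  exact (integrable_map_measure h.aestronglyMeasurable (hYmeas p).aemeasurable).1 h

lemma integral_Y_sq (p : ℕ × ℕ) : ∫ ω, (Y p ω) ^ 2 ∂P = v := by
  have h : ∫ ω, (Y p ω) ^ 2 ∂P = ∫ x, x ^ 2 ∂(Measure.map (Y p) P) := by
    rw [integral_map (hYmeas p).aemeasurable]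
    exact (continuous_pow 2).aestronglyMeasurable
  rw [h, hYdist p, integral_sq_gaussianReal hv]

omit hv hYmeas hYdist

variable (hYindep : iIndepFun Y P)

include hv hYmeas hYdist hYindep

lemma integrable_Y_mul {p q : ℕ × ℕ} (hpq : p ≠ q) :
    Integrable (fun ω => Y p ω * Y q ω) P :=
  (hYindep.indepFun hpq).integrable_mul (integrable_Y hv hYmeas hYdist p)
    (integrable_Y hv hYmeas hYdist q)

lemma integral_Y_mul {p q : ℕ × ℕ} (hpq : p ≠ q) :
    ∫ ω, Y p ω * Y q ω ∂P = 0 := by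
  have h := (hYindep.indepFun hpq).integral_mul_eq_mul_integral
    (integrable_Y hv hYmeas hYdist p).aestronglyMeasurable
    (integrable_Y hv hYmeas hYdist q).aestronglyMeasurable
  have h2 : ∫ ω, Y p ω * Y q ω ∂P = ∫ ω, (Y p * Y q) ω ∂P := rfl
  rw [h2, h, integral_Y hv hYmeas hYdist p, zero_mul]

omit hv hYmeas hYdist hYindep

/-- The within-group sum of squares as a process on `Ω`. -/
def Wproc (m : ℕ) (Y : ℕ × ℕ → Ω → ℝ) (i : ℕ) (ω : Ω) : ℝ :=
  ∑ j ∈ Finset.range m, (Y (i, j) ω) ^ 2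

/-- The squared scaled block sum as a process on `Ω`. -/
def Dproc (m : ℕ) (Y : ℕ × ℕ → Ω → ℝ) (i : ℕ) (ω : Ω) : ℝ :=
  ((∑ j ∈ Finset.range m, Y (i, j) ω) / m) ^ 2

lemma Wproc_eq_comp (i : ℕ) :
    Wproc m Y i = fun ω => (fun y : Fin m → ℝ => ∑ j, (y j) ^ 2) (blockVec m Y i ω) := by
  funext ω
  rw [Wproc]
  exact (Fin.sum_univ_eq_sum_range (fun j => (Y (i, j) ω) ^ 2) m).symm

lemma Dproc_eq_comp (i : ℕ) :
    Dproc m Y i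
      = fun ω => (fun y : Fin m → ℝ => ((∑ j, y j) / m) ^ 2) (blockVec m Y i ω) := by
  funext ω
  rw [Dproc]
  congr 1
  rw [← Fin.sum_univ_eq_sum_range (fun j => Y (i, j) ω) m]
  rfl

lemma measurable_gW : Measurable (fun y : Fin m → ℝ => ∑ j, (y j) ^ 2) := by
  fun_prop

lemma measurable_gD : Measurable (fun y : Fin m → ℝ => ((∑ j, y j) / (m:ℝ)) ^ 2) := by
  fun_prop

include hv hYmeas hYdist

lemma integrable_Wproc (i : ℕ) : Integrable (Wproc m Y i) P := by
  rw [show Wproc m Y i = fun ω => ∑ j ∈ Finset.range m, (Y (i, j) ω) ^ 2 from rfl]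
  exact integrable_finset_sum _ fun j _ => integrable_Y_sq hv hYmeas hYdist (i, j)

lemma integral_Wproc (i : ℕ) : ∫ ω, Wproc m Y i ω ∂P = m * v := by
  simp only [Wproc]
  rw [integral_finset_sum _ fun j _ => integrable_Y_sq hv hYmeas hYdist (i, j)]
  rw [Finset.sum_congr rfl fun j _ => integral_Y_sq hv hYmeas hYdist (i, j)]
  rw [Finset.sum_const, Finset.card_range, nsmul_eq_mul]

omit hv hYmeas hYdist

include hv hYmeas hYdist hYindep

lemma integrable_Dproc (i : ℕ) : Integrable (Dproc m Y i) P := by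
  have hexp : Dproc m Y i = fun ω =>
      (1 / (m:ℝ)^2) * ∑ j ∈ Finset.range m, ∑ k ∈ Finset.range m, Y (i, j) ω * Y (i, k) ω := by
    funext ω
    rw [Dproc, div_pow, ← Finset.sum_mul_sum]
    ring
  rw [hexp]
  refine Integrable.const_mul ?_ _
  refine integrable_finset_sum _ fun j _ => integrable_finset_sum _ fun k _ => ?_
  by_cases hjk : j = k
  · subst hjk
    exact (integrable_Y_sq hv hYmeas hYdist (i, j)).congr
      (ae_of_all _ fun ω => pow_two (Y (i, j) ω))
  · exact integrable_Y_mul hv hYmeas hYdist hYindep (by simp [Prod.ext_iff, hjk])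

lemma integral_Dproc (hm : m ≠ 0) (i : ℕ) : ∫ ω, Dproc m Y i ω ∂P = v / m := by
  have hm' : (m:ℝ) ≠ 0 := Nat.cast_ne_zero.2 hm
  have hexp : Dproc m Y i = fun ω =>
      (1 / (m:ℝ)^2) * ∑ j ∈ Finset.range m, ∑ k ∈ Finset.range m, Y (i, j) ω * Y (i, k) ω := by
    funext ω
    rw [Dproc, div_pow, ← Finset.sum_mul_sum]
    ring
  have hint : ∀ j ∈ Finset.range m, ∀ k ∈ Finset.range m,
      Integrable (fun ω => Y (i, j) ω * Y (i, k) ω) P := by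
    intro j _ k _
    by_cases hjk : j = k
    · subst hjk
      exact (integrable_Y_sq hv hYmeas hYdist (i, j)).congr
        (ae_of_all _ fun ω => pow_two (Y (i, j) ω))
    · exact integrable_Y_mul hv hYmeas hYdist hYindep (by simp [Prod.ext_iff, hjk])
  rw [hexp, integral_const_mul,
    integral_finset_sum _ (fun j hj => integrable_finset_sum _ fun k hk => hint j hj k hk)]
  have hval : ∀ j ∈ Finset.range m,
      ∫ ω, ∑ k ∈ Finset.range m, Y (i, j) ω * Y (i, k) ω ∂P = (v:ℝ) := by
    intro j hj
    rw [integral_finset_sum _ fun k hk => hint j hj k hk]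
    have : ∀ k ∈ Finset.range m, ∫ ω, Y (i, j) ω * Y (i, k) ω ∂P
        = if k = j then (v:ℝ) else 0 := by
      intro k _
      by_cases hjk : k = j
      · subst hjk
        rw [if_pos rfl]
        have : (fun ω => Y (i, k) ω * Y (i, k) ω) = fun ω => (Y (i, k) ω)^2 := by
          funext ω; ring
        rw [this]
        exact integral_Y_sq hv hYmeas hYdist (i, k)
      · rw [if_neg hjk]
        exact integral_Y_mul hv hYmeas hYdist hYindep (by simp [Prod.ext_iff]; tauto)
    rw [Finset.sum_congr rfl this, Finset.sum_ite_eq' (Finset.range m) j (fun _ => (v:ℝ)),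
      if_pos hj]
  rw [Finset.sum_congr rfl hval, Finset.sum_const, Finset.card_range, nsmul_eq_mul]
  field_simp

lemma slln_W :
    ∀ᵐ ω ∂P, Tendsto (fun n : ℕ => (∑ i ∈ Finset.range n, Wproc m Y i ω) / n)
      atTop (𝓝 ((m:ℝ) * v)) := by
  have hpair : Pairwise (Function.onFun (IndepFun · · P) (Wproc m Y)) := by
    have h := comp_blockVec_pairwise (m := m) hYmeas hYindep (measurable_gW (m := m))
    have heq : (fun i ω => (fun y : Fin m → ℝ => ∑ j, (y j) ^ 2) (blockVec m Y i ω))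
        = Wproc m Y := by
      funext i
      exact (Wproc_eq_comp i).symm
    rwa [heq] at h
  have hident : ∀ i, IdentDistrib (Wproc m Y i) (Wproc m Y 0) P P := by
    intro i
    have h := comp_blockVec_identDistrib (m := m) hYmeas hYindep hYdist
      (measurable_gW (m := m)) i
    rwa [← Wproc_eq_comp i, ← Wproc_eq_comp 0] at h
  have h := strong_law_ae_real (μ := P) (Wproc m Y)
    (integrable_Wproc hv hYmeas hYdist 0) hpair hident
  rw [integral_Wproc hv hYmeas hYdist 0] at h
  exact h

lemma slln_D :
    ∀ᵐ ω ∂P, Tendsto (fun n : ℕ => (∑ i ∈ Finset.range n, Dproc m Y i ω) / n)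
      atTop (𝓝 ((v:ℝ) / m)) := by
  have hpair : Pairwise (Function.onFun (IndepFun · · P) (Dproc m Y)) := by
    have h := comp_blockVec_pairwise (m := m) hYmeas hYindep (measurable_gD (m := m))
    have heq : (fun i ω => (fun y : Fin m → ℝ => ((∑ j, y j) / (m:ℝ)) ^ 2) (blockVec m Y i ω))
        = Dproc m Y := by
      funext i
      exact (Dproc_eq_comp i).symm
    rwa [heq] at h
  have hident : ∀ i, IdentDistrib (Dproc m Y i) (Dproc m Y 0) P P := by
    intro i
    have h := comp_blockVec_identDistrib (m := m) hYmeas hYindep hYdist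
      (measurable_gD (m := m)) i
    rwa [← Dproc_eq_comp i, ← Dproc_eq_comp 0] at h
  by_cases hm : m = 0
  · subst hm
    have hD0 : Dproc 0 Y = fun _ _ => 0 := by
      funext i ω
      simp [Dproc]
    rw [hD0]
    simp only [Nat.cast_zero, div_zero]
    filter_upwards with ω
    have : (fun n : ℕ => (∑ _i ∈ Finset.range n, (0:ℝ)) / n) = fun n : ℕ => 0 := by
      funext n; simp
    rw [this]
    exact tendsto_const_nhds
  · have h := strong_law_ae_real (μ := P) (Dproc m Y)
      (integrable_Dproc hv hYmeas hYdist hYindep 0) hpair hident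
    rw [integral_Dproc hv hYmeas hYdist hYindep hm 0] at h
    exact h

lemma bc_D (k : ℕ) :
    ∀ᵐ ω ∂P, ∀ᶠ i in atTop, Dproc m Y i ω ≤ (i : ℝ) / ((k:ℝ)+1) := by
  letI : MeasureSpace Ω := ⟨P⟩
  haveI : IsProbabilityMeasure (ℙ : Measure Ω) := ‹IsProbabilityMeasure P›
  have hZint : Integrable (fun ω => ((k:ℝ)+1) * Dproc m Y 0 ω) P :=
    (integrable_Dproc hv hYmeas hYdist hYindep 0).const_mul _
  have hZnn : 0 ≤ fun ω => ((k:ℝ)+1) * Dproc m Y 0 ω := by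
    intro ω
    have : 0 ≤ Dproc m Y 0 ω := sq_nonneg _
    positivity
  have hident : ∀ i, IdentDistrib (fun ω => ((k:ℝ)+1) * Dproc m Y i ω)
      (fun ω => ((k:ℝ)+1) * Dproc m Y 0 ω) P P := by
    intro i
    have h := comp_blockVec_identDistrib (m := m) hYmeas hYindep hYdist
      (g := fun y : Fin m → ℝ => ((k:ℝ)+1) * (((∑ j, y j) / (m:ℝ)) ^ 2))
      (by fun_prop) i
    have he : ∀ i : ℕ, (fun ω => (fun y : Fin m → ℝ => ((k:ℝ)+1) * (((∑ j, y j) / (m:ℝ)) ^ 2))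
        (blockVec m Y i ω)) = fun ω => ((k:ℝ)+1) * Dproc m Y i ω := by
      intro i
      funext ω
      have h2 := congrFun (Dproc_eq_comp (Y := Y) (m := m) i) ω
      dsimp only at h2 ⊢
      rw [h2]
    rwa [he i, he 0] at h
  have A : (∑' i : ℕ, P {ω | ((k:ℝ)+1) * Dproc m Y i ω ∈ Set.Ioi (i:ℝ)}) ≠ ⊤ := by
    have hlt := tsum_prob_mem_Ioi_lt_top (X := fun ω => ((k:ℝ)+1) * Dproc m Y 0 ω) hZint hZnn
    have heq : ∀ i : ℕ, P {ω | ((k:ℝ)+1) * Dproc m Y i ω ∈ Set.Ioi (i:ℝ)}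
        = P {ω | ((k:ℝ)+1) * Dproc m Y 0 ω ∈ Set.Ioi (i:ℝ)} := fun i =>
      (hident i).measure_mem_eq measurableSet_Ioi
    rw [tsum_congr heq]
    exact hlt.ne
  have hbc := ae_eventually_notMem (μ := P)
    (s := fun i : ℕ => {ω | ((k:ℝ)+1) * Dproc m Y i ω ∈ Set.Ioi (i:ℝ)}) A
  filter_upwards [hbc] with ω hω
  filter_upwards [hω] with i hi
  simp only [Set.mem_setOf_eq, Set.mem_Ioi, not_lt] at hi
  rw [div_eq_inv_mul]
  calc Dproc m Y i ω = (((k:ℝ)+1))⁻¹ * (((k:ℝ)+1) * Dproc m Y i ω) := by field_simp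
    _ ≤ (((k:ℝ)+1))⁻¹ * i := by
        have h2 : (0:ℝ) ≤ (((k:ℝ)+1))⁻¹ := by positivity
        exact mul_le_mul_of_nonneg_left hi h2

omit hv hYmeas hYdist hYindep in
lemma tendsto_max_div {d : ℕ → ℝ} (hd : ∀ i, 0 ≤ d i)
    (h : ∀ k : ℕ, ∀ᶠ i in atTop, d i ≤ (i:ℝ) / ((k:ℝ)+1)) :
    Tendsto (fun s : ℕ => ((Finset.range (s+1)).sup' (by simp) d) / ((s:ℝ)+1))
      atTop (𝓝 0) := by
  have hnn : ∀ s : ℕ, 0 ≤ ((Finset.range (s+1)).sup' (by simp) d) / ((s:ℝ)+1) := by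
    intro s
    apply div_nonneg _ (by positivity)
    exact le_trans (hd 0) (Finset.le_sup' d (by simp))
  rw [tendsto_order]
  constructor
  · intro a ha
    filter_upwards with s
    exact lt_of_lt_of_le ha (hnn s)
  · intro a ha
    obtain ⟨k, hk⟩ := exists_nat_one_div_lt (half_pos ha)
    obtain ⟨N, hN⟩ := (h k).exists_forall_of_atTop
    set C := (Finset.range (N+1)).sup' (by simp) d with hC
    have hC0 : 0 ≤ C := le_trans (hd 0) (Finset.le_sup' d (by simp))
    have hCt : Tendsto (fun s : ℕ => C / ((s:ℝ)+1)) atTop (𝓝 0) := by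
      have := tendsto_one_div_add_atTop_nhds_zero_nat.const_mul C
      simpa [div_eq_mul_inv, mul_comm] using this
    have hCev : ∀ᶠ s : ℕ in atTop, C / ((s:ℝ)+1) < a/2 :=
      hCt.eventually (gt_mem_nhds (by linarith))
    filter_upwards [hCev] with s hs
    have hsup : (Finset.range (s+1)).sup' (by simp) d ≤ C + (s:ℝ) / ((k:ℝ)+1) := by
      apply Finset.sup'_le
      intro i hi
      rw [Finset.mem_range] at hi
      by_cases hiN : i ≤ N
      · have h4 : d i ≤ C := Finset.le_sup' (s := Finset.range (N+1)) d
          (Finset.mem_range.2 (by omega))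
        have : (0:ℝ) ≤ (s:ℝ) / ((k:ℝ)+1) := by positivity
        linarith
      · have h1 : d i ≤ (i:ℝ) / ((k:ℝ)+1) := hN i (by omega)
        have h2 : (i:ℝ) ≤ (s:ℝ) := by exact_mod_cast Nat.lt_succ_iff.1 hi
        have h3 : (i:ℝ) / ((k:ℝ)+1) ≤ (s:ℝ) / ((k:ℝ)+1) := by
          apply div_le_div_of_nonneg_right h2 (by positivity) |>.trans_eq rfl
        linarith
    have hdiv : ((Finset.range (s+1)).sup' (by simp) d) / ((s:ℝ)+1)
        ≤ C / ((s:ℝ)+1) + ((s:ℝ) / ((k:ℝ)+1)) / ((s:ℝ)+1) := by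
      rw [← add_div]
      exact div_le_div_of_nonneg_right hsup (by positivity) |>.trans_eq rfl
    have hlast : ((s:ℝ) / ((k:ℝ)+1)) / ((s:ℝ)+1) ≤ 1 / ((k:ℝ)+1) := by
      rw [div_div, div_le_div_iff₀ (by positivity) (by positivity)]
      have : (s:ℝ) ≤ (s:ℝ) + 1 := by linarith
      nlinarith [Nat.cast_nonneg (α := ℝ) s, Nat.cast_nonneg (α := ℝ) k]
    have hk2 : 1 / ((k:ℝ)+1) < a/2 := hk
    calc ((Finset.range (s+1)).sup' (by simp) d) / ((s:ℝ)+1)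
        ≤ C / ((s:ℝ)+1) + ((s:ℝ) / ((k:ℝ)+1)) / ((s:ℝ)+1) := hdiv
      _ < a/2 + a/2 := by
          have := hlast.trans_lt hk2
          linarith
      _ = a := by ring

end Prob


end Aux

open Real Set
open scoped ENNReal

/-- Under A1–A4 with all sample sizes equal to a fixed `m ≥ 2`
(`n₀⁽ˢ⁾ = n⁽ˢ⁾ = m`), `σ̂²_{(s)} → ((m−1)/m) σ²` almost surely; in particular the MLE
of the variance is inconsistent. -/
theorem sigmaHat_inconsistent_fixed_sample_sizes
    {Ω : Type*} [MeasurableSpace Ω] (P : Measure Ω) [IsProbabilityMeasure P]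
    (μ : ℕ → ℝ) (v : ℝ≥0) (hv : v ≠ 0)
    (m : ℕ) (hm : 2 ≤ m)
    -- A1: tree order restriction
    (hA1 : ∀ i, 1 ≤ i → μ 0 ≤ μ i)
    -- A2: uniformly bounded means
    (hA2 : ∃ B > 0, ∀ i, μ i ≤ B)
    -- A3: independent normal observations, common variance v
    (X : ℕ → ℕ → Ω → ℝ)
    (hmeas : ∀ i j, Measurable (X i j))
    (hindep : iIndepFun (fun p : ℕ × ℕ => X p.1 p.2) P)
    (hdist : ∀ i j, Measure.map (X i j) P = gaussianReal (μ i) v) :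
    ∀ᵐ ω ∂P,
      Tendsto (fun s : ℕ => sigmaHat m m s fun i j => X i j ω)
        atTop (𝓝 (((m : ℝ) - 1) / (m : ℝ) * (v : ℝ))) := by
  have hm0 : m ≠ 0 := by omega
  have hm' : (m:ℝ) ≠ 0 := Nat.cast_ne_zero.2 hm0
  set Y : ℕ × ℕ → Ω → ℝ := fun p ω => X p.1 p.2 ω - μ p.1 with hY
  have hYmeas : ∀ p, Measurable (Y p) := fun p => (hmeas p.1 p.2).sub measurable_const
  have hYindep : iIndepFun Y P := by
    exact hindep.comp (fun p (x : ℝ) => x - μ p.1)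
      (fun p => measurable_id.sub measurable_const)
  have hYdist : ∀ p, Measure.map (Y p) P = gaussianReal 0 v := by
    intro p
    have h1 : Y p = (fun x : ℝ => x + (-μ p.1)) ∘ (X p.1 p.2) := by
      funext ω; simp [hY, sub_eq_add_neg]
    rw [h1, ← Measure.map_map (by fun_prop) (hmeas p.1 p.2), hdist p.1 p.2,
      gaussianReal_map_add_const (-μ p.1)]
    simp
  filter_upwards [slln_W hv hYmeas hYdist hYindep, slln_D hv hYmeas hYdist hYindep,
    ae_all_iff.2 (fun k : ℕ => bc_D hv hYmeas hYdist hYindep k)] with ω hW hD hBC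
  set x : ℕ → ℕ → ℝ := fun i j => X i j ω with hx
  have hWx : ∀ i, Wproc m Y i ω = wStat m μ x i := fun i => rfl
  have hDx : ∀ i, Dproc m Y i ω = dStat m μ x i := fun i => rfl
  -- limit of the first term
  have hWs : Tendsto (fun s : ℕ => (∑ i ∈ Finset.range (s+1), wStat m μ x i) / ((s:ℝ)+1))
      atTop (𝓝 ((m:ℝ) * v)) := by
    have h := hW.comp (tendsto_add_atTop_nat 1)
    refine h.congr fun s => ?_
    simp only [Function.comp]
    rw [Finset.sum_congr rfl fun i _ => hWx i]
    push_cast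
    ring_nf
  have h1 : Tendsto (fun s : ℕ =>
      (∑ i ∈ Finset.range (s+1), wStat m μ x i) / (((s:ℝ)+1) * m)) atTop (𝓝 (v:ℝ)) := by
    have h := hWs.div_const (m:ℝ)
    have hlim : ((m:ℝ) * v) / m = v := by field_simp
    rw [hlim] at h
    refine h.congr fun s => ?_
    rw [div_div]
  -- limit of the second term
  have h2 : Tendsto (fun s : ℕ =>
      (∑ i ∈ Finset.range (s+1), dStat m μ x i) / ((s:ℝ)+1)) atTop (𝓝 ((v:ℝ)/m)) := by
    have h := hD.comp (tendsto_add_atTop_nat 1)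
    refine h.congr fun s => ?_
    simp only [Function.comp]
    rw [Finset.sum_congr rfl fun i _ => hDx i]
    push_cast
    ring_nf
  -- limit of the residual term
  have hsupD : Tendsto (fun s : ℕ =>
      ((Finset.range (s+1)).sup' (by simp) (dStat m μ x)) / ((s:ℝ)+1)) atTop (𝓝 0) := by
    refine tendsto_max_div (d := dStat m μ x) (fun i => sq_nonneg _) ?_
    intro k
    filter_upwards [hBC k] with i hi
    rw [← hDx i]
    exact hi
  set E : ℕ → ℝ := fun s =>
    (treeMLE0 m m s (xbarVec m m x) - xbarVec m m x 0) ^ 2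
      + ∑ i ∈ Finset.Icc 1 s,
          (max (treeMLE0 m m s (xbarVec m m x)) (xbarVec m m x i) - xbarVec m m x i) ^ 2
    with hE
  have hEnn : ∀ s, 0 ≤ E s := by
    intro s
    apply add_nonneg (sq_nonneg _)
    exact Finset.sum_nonneg fun i _ => sq_nonneg _
  have hEle : ∀ s, E s ≤ 4 * dStat m μ x 0
      + 4 * ((Finset.range (s+1)).sup' (by simp) (dStat m μ x)) := by
    intro s
    have hswap : (treeMLE0 m m s (xbarVec m m x) - xbarVec m m x 0) ^ 2
        = (xbarVec m m x 0 - treeMLE0 m m s (xbarVec m m x)) ^ 2 := by ring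
    have hr := resid_sum_le (s := s) (x := x) hm0
    have hb := xb0_sub_c_sq_le (s := s) (x := x) (μ := μ) hm0 hA1
    rw [hE]
    dsimp only
    rw [hswap]
    linarith
  have h3 : Tendsto (fun s : ℕ => E s / ((s:ℝ)+1)) atTop (𝓝 0) := by
    apply squeeze_zero (fun s => div_nonneg (hEnn s) (by positivity))
      (g := fun s : ℕ => (4 * dStat m μ x 0) / ((s:ℝ)+1)
        + 4 * (((Finset.range (s+1)).sup' (by simp) (dStat m μ x)) / ((s:ℝ)+1)))
    · intro s
      have hq : (0:ℝ) < (s:ℝ)+1 := by positivity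
      have hrhs : (4 * dStat m μ x 0) / ((s:ℝ)+1)
          + 4 * (((Finset.range (s+1)).sup' (by simp) (dStat m μ x)) / ((s:ℝ)+1))
          = (4 * dStat m μ x 0
              + 4 * ((Finset.range (s+1)).sup' (by simp) (dStat m μ x))) / ((s:ℝ)+1) := by
        field_simp
      rw [hrhs]
      exact div_le_div_of_nonneg_right (hEle s) hq.le |>.trans_eq rfl
    · have hg1 : Tendsto (fun s : ℕ => (4 * dStat m μ x 0) / ((s:ℝ)+1)) atTop (𝓝 0) := by
        have := tendsto_one_div_add_atTop_nhds_zero_nat.const_mul (4 * dStat m μ x 0)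
        simpa [div_eq_mul_inv, mul_comm] using this
      have hg2 := hsupD.const_mul (4:ℝ)
      have := hg1.add hg2
      simpa using this
  -- combine
  have hfinal := (h1.sub h2).add h3
  have hval : (v:ℝ) - (v:ℝ)/m + 0 = ((m:ℝ) - 1) / (m:ℝ) * (v:ℝ) := by
    field_simp
    ring
  rw [hval] at hfinal
  refine hfinal.congr fun s => ?_
  rw [sigmaHat_decomp (x := x) (μ := μ) hm0]
  have hq : ((s:ℝ)+1) ≠ 0 := by positivity
  rw [eq_comm]
  field_simp
  ring
end
end

section
/- Under assumption A4, if (ρ^{(s)}/(1+ρ^{(s)})) λ^{(s)} 𝟙{λ^{(s)} < 0} → 0 in probability, where ρ^{(s)} = s·n^{(s)}/n_0^{(s)} and λ^{(s)} = min_{1≤i≤s} (X̄_i^{(s)} − X̄_0^{(s)}), then X̄_0^{(s)} − μ̂_0^{(s)} → 0 in probability. -/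
open MeasureTheory ProbabilityTheory Filter Finset BoundedContinuousFunction
open scoped NNReal Topology

noncomputable section


/-- `λ⁽ˢ⁾ = min_{1 ≤ i ≤ s} (X̄ᵢ − X̄₀)` (junk value `0` if `s = 0`). -/
def lamFun (s : ℕ) (xbar : ℕ → ℝ) : ℝ :=
  if h : (Finset.Icc 1 s).Nonempty then (Finset.Icc 1 s).inf' h fun i => xbar i - xbar 0
  else 0

lemma treeMLE0_le_xbar0_s14 (n0 nn s : ℕ) (h0 : 1 ≤ n0) (xbar : ℕ → ℝ) :
    treeMLE0 n0 nn s xbar ≤ xbar 0 := by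
  have h0' : (0:ℝ) < n0 := by exact_mod_cast h0
  have := Finset.inf'_le
    (f := fun I => ((n0 : ℝ) * xbar 0 + ∑ i ∈ I, (nn : ℝ) * xbar i)
      / ((n0 : ℝ) + (nn : ℝ) * I.card))
    (Finset.empty_mem_powerset (Finset.Icc 1 s))
  exact le_trans this (le_of_eq (by simp [mul_div_assoc, mul_div_cancel_left₀, h0'.ne']))

lemma key_bound (n0 nn s : ℕ) (h0 : 1 ≤ n0) (hn : 1 ≤ nn) (xbar : ℕ → ℝ) :
    |xbar 0 - treeMLE0 n0 nn s xbar| ≤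
      |((s : ℝ) * nn / n0) / (1 + (s : ℝ) * nn / n0) *
        (if lamFun s xbar < 0 then lamFun s xbar else 0)| := by
  have h0' : (0:ℝ) < n0 := by exact_mod_cast h0
  have hn' : (0:ℝ) < nn := by exact_mod_cast hn
  set lam := lamFun s xbar with hlam
  have hif : (if lam < 0 then lam else 0) = min lam 0 := by
    split_ifs with h
    · exact (min_eq_left h.le).symm
    · exact (min_eq_right (not_lt.mp h)).symm
  set l0 : ℝ := min lam 0 with hl0
  have hl0le : l0 ≤ 0 := min_le_right _ _
  have hsn : (0:ℝ) ≤ (s : ℝ) * nn := by positivity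
  have hD : (0:ℝ) < (n0 : ℝ) + (s : ℝ) * nn := by linarith
  have hcoef : ((s : ℝ) * nn / n0) / (1 + (s : ℝ) * nn / n0)
      = (s : ℝ) * nn / ((n0 : ℝ) + (s : ℝ) * nn) := by
    have hne1 : 1 + (s : ℝ) * nn / n0 ≠ 0 := by positivity
    field_simp
  rw [hif, hcoef]
  set r : ℝ := (s : ℝ) * nn / ((n0 : ℝ) + (s : ℝ) * nn) with hr
  have hrnn : 0 ≤ r := by positivity
  have hrl0 : r * l0 ≤ 0 := mul_nonpos_of_nonneg_of_nonpos hrnn hl0le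
  have hub : treeMLE0 n0 nn s xbar ≤ xbar 0 := treeMLE0_le_xbar0_s14 n0 nn s h0 xbar
  have hlb : xbar 0 + r * l0 ≤ treeMLE0 n0 nn s xbar := by
    rcases Nat.eq_zero_or_pos s with hs | hs
    · subst hs
      have : treeMLE0 n0 nn 0 xbar = xbar 0 := by
        simp [treeMLE0, show Finset.Icc 1 0 = (∅ : Finset ℕ) by simp,
          mul_div_assoc, mul_div_cancel_left₀, h0'.ne']
      rw [this]
      linarith
    · have hne : (Finset.Icc 1 s).Nonempty := by
        refine ⟨1, ?_⟩; simp; omega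
      apply Finset.le_inf'
      intro I hI
      have hIsub : I ⊆ Finset.Icc 1 s := Finset.mem_powerset.mp hI
      have hcard : (I.card : ℝ) ≤ s := by
        have := Finset.card_le_card hIsub
        rw [Nat.card_Icc] at this
        exact_mod_cast this.trans (by omega)
      set c : ℝ := (I.card : ℝ) with hc
      have hcnn : 0 ≤ c := Nat.cast_nonneg _
      have hd : (0:ℝ) < (n0 : ℝ) + (nn : ℝ) * c := by
        have := mul_nonneg hn'.le hcnn; linarith
      have hsum : (I.card : ℝ) * ((nn : ℝ) * (xbar 0 + l0)) ≤ ∑ i ∈ I, (nn : ℝ) * xbar i := by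
        rw [← nsmul_eq_mul, ← Finset.sum_const]
        apply Finset.sum_le_sum
        intro i hi
        have hilam : lam ≤ xbar i - xbar 0 := by
          rw [hlam, lamFun, dif_pos hne]
          exact Finset.inf'_le _ (hIsub hi)
        have : l0 ≤ xbar i - xbar 0 := le_trans (min_le_left _ _) hilam
        nlinarith
      rw [le_div_iff₀ hd]
      have hrc : (nn : ℝ) * c ≤ r * ((n0 : ℝ) + (nn : ℝ) * c) := by
        rw [hr, div_mul_eq_mul_div, le_div_iff₀ hD]
        nlinarith [mul_le_mul_of_nonneg_right hcard (by positivity : (0:ℝ) ≤ (nn:ℝ) * n0)]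
      have hmul := mul_le_mul_of_nonpos_right hrc hl0le
      nlinarith
  have habs : |r * l0| = -(r * l0) := abs_of_nonpos hrl0
  rw [habs, abs_le]
  constructor <;> linarith

/-- Under assumption A4, if `(ρ⁽ˢ⁾/(1+ρ⁽ˢ⁾)) λ⁽ˢ⁾ 𝟙{λ⁽ˢ⁾ < 0} → 0` in
probability, where `ρ⁽ˢ⁾ = s n⁽ˢ⁾ / n₀⁽ˢ⁾` and `λ⁽ˢ⁾ = min_{1 ≤ i ≤ s} (X̄ᵢ − X̄₀)`, then
`X̄₀⁽ˢ⁾ − μ̂₀⁽ˢ⁾ → 0` in probability. -/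
theorem xbar0_sub_treeMLE0_tendsto_zero_in_probability
    {Ω : Type*} [MeasurableSpace Ω] (P : Measure Ω) [IsProbabilityMeasure P]
    (μ : ℕ → ℝ) (v : ℝ≥0) (hv : v ≠ 0)
    (n0 nn : ℕ → ℕ)
    -- A4: common treatment sample size, non-decreasing sample sizes
    (h0pos : ∀ s, 1 ≤ n0 s) (hnpos : ∀ s, 1 ≤ nn s)
    (h0mono : Monotone n0) (hnmono : Monotone nn)
    -- independent normal observations, common variance v
    (X : ℕ → ℕ → Ω → ℝ)
    (hmeas : ∀ i j, Measurable (X i j))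
    (hindep : iIndepFun (fun p : ℕ × ℕ => X p.1 p.2) P)
    (hdist : ∀ i j, Measure.map (X i j) P = gaussianReal (μ i) v)
    (hyp : ∀ ε : ℝ, 0 < ε →
        Tendsto (fun s : ℕ =>
            P {ω | ε ≤ |((s : ℝ) * nn s / n0 s) / (1 + (s : ℝ) * nn s / n0 s) *
                (if lamFun s (xbarVec (n0 s) (nn s) fun i j => X i j ω) < 0 then
                  lamFun s (xbarVec (n0 s) (nn s) fun i j => X i j ω) else 0)|})
          atTop (𝓝 0)) :
    ∀ ε : ℝ, 0 < ε →
      Tendsto (fun s : ℕ =>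
          P {ω | ε ≤ |(xbarVec (n0 s) (nn s) fun i j => X i j ω) 0
              - treeMLE0 (n0 s) (nn s) s (xbarVec (n0 s) (nn s) fun i j => X i j ω)|})
        atTop (𝓝 0) := by
  intro ε hε
  refine tendsto_of_tendsto_of_tendsto_of_le_of_le tendsto_const_nhds (hyp ε hε)
    (fun s => zero_le) (fun s => measure_mono ?_)
  intro ω hω
  simp only [Set.mem_setOf_eq] at hω ⊢
  exact hω.trans (key_bound (n0 s) (nn s) s (h0pos s) (hnpos s) _)
end
end
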